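/- Let u be a semiclassical moment functional on real polynomials in d variables, with data Φ symmetric d×d of degree p, Ψ of size d×1 with degree q ≥ 1, s = max{p−2, q−1}, let L be the associated second-order operator, and let {ℙ_n}_{n≥0} be a WOPS with respect to u. Then: (i) for every n ≥ s+1 there exist constant real matrices Λ_i^n of size r_i×r_n, for n−s ≤ i ≤ n+s, such that L[ℙ_n^t] = Σ_{i=n−s}^{n+s} ℙ_i^t Λ_i^n; and (ii) for every 0 ≤ n ≤ s there exist constant real matrices Λ_i^n of size r_i×r_n, for 1 ≤ i ≤ n+s, such that L[ℙ_n^t] = Σ_{i=1}^{n+s} ℙ_i^t Λ_i^n (in particular the coefficient of ℙ_0^t is always zero). -/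
import Mathlib


open MvPolynomial Matrix Finset MeasureTheory

noncomputable section

/-- Real polynomials in `d` variables. -/
abbrev MPoly (d : ℕ) := MvPolynomial (Fin d) ℝ

/-- A moment functional: a linear functional on `MPoly d`. -/
abbrev MomF (d : ℕ) := MPoly d →ₗ[ℝ] ℝ

/-- `r_n = binom(n + d - 1, n)`, the dimension of the space of homogeneous
polynomials of degree `n` in `d` variables. -/
def rdim (d n : ℕ) : ℕ := (n + d - 1).choose n

/-- Entrywise application of a moment functional to a polynomial matrix. -/
def mApply {d : ℕ} (u : MomF d) {m n : Type*} (M : Matrix m n (MPoly d)) : Matrix m n ℝ :=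
  Matrix.of fun i j => u (M i j)

/-- The matrix Pearson equation `div(Φ u) = Ψᵗ u`, i.e. `⟨u, Φ ∇f + Ψ f⟩ = 0`
for every polynomial `f` (a system of `d` scalar equations). -/
def Pearson {d : ℕ} (u : MomF d) (Φ : Matrix (Fin d) (Fin d) (MPoly d))
    (Ψ : Fin d → MPoly d) : Prop :=
  ∀ f : MPoly d, ∀ i : Fin d, u (∑ j, Φ i j * pderiv j f + Ψ i * f) = 0

/-- Degree of a polynomial matrix: max of total degrees of the entries. -/
def matDeg {d : ℕ} {m n : Type*} [Fintype m] [Fintype n]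
    (M : Matrix m n (MPoly d)) : ℕ :=
  Finset.univ.sup fun p : m × n => (M p.1 p.2).totalDegree

/-- Degree of a polynomial (column) vector. -/
def vecDeg {d : ℕ} {m : Type*} [Fintype m] (v : m → MPoly d) : ℕ :=
  Finset.univ.sup fun i => (v i).totalDegree

/-- The Jacobian `∇ℙᵗ`: the `d × m` matrix with `(i,k)` entry `∂ᵢ P k`. -/
def gradT {d m : ℕ} (P : Fin m → MPoly d) : Matrix (Fin d) (Fin m) (MPoly d) :=
  Matrix.of fun i k => pderiv i (P k)

/-- The Kronecker product `I_d ⊗ ℙᵗ`: the block-diagonal `d × (d·m)` matrix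
whose `d` diagonal blocks equal the row vector `ℙᵗ`. -/
def kronIdRow {d m : ℕ} (P : Fin m → MPoly d) :
    Matrix (Fin d) (Fin d × Fin m) (MPoly d) :=
  Matrix.of fun i jk => if i = jk.1 then P jk.2 else 0

/-- A constant real matrix viewed as a polynomial matrix. -/
def cmap {d : ℕ} {m n : Type*} (F : Matrix m n ℝ) : Matrix m n (MPoly d) :=
  F.map MvPolynomial.C

/-- `{ℙ_n}` is a weak orthogonal polynomial system with respect to `u`:
each entry of `ℙ_n` has total degree `n`, the entries of `ℙ_0, …, ℙ_n` form a
basis of the polynomials of total degree at most `n` (spanning + linear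
independence), `⟨u, ℙ_n ℙ_mᵗ⟩ = 0` for `n ≠ m`, and `H_n = ⟨u, ℙ_n ℙ_nᵗ⟩` is
nonsingular. -/
structure IsWOPS {d : ℕ} (u : MomF d) (P : (n : ℕ) → Fin (rdim d n) → MPoly d) : Prop where
  deg : ∀ n k, (P n k).totalDegree = n
  span : ∀ n : ℕ, MvPolynomial.restrictTotalDegree (Fin d) ℝ n ≤
    Submodule.span ℝ {g | ∃ m ≤ n, ∃ k, P m k = g}
  indep : LinearIndependent ℝ (fun p : (n : ℕ) × Fin (rdim d n) => P p.1 p.2)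
  orth : ∀ m n, m ≠ n → ∀ j k, u (P m j * P n k) = 0
  Hdet : ∀ n, (Matrix.of fun j k : Fin (rdim d n) => u (P n j * P n k)).det ≠ 0

/-- The matrix `H_n = ⟨u, ℙ_n ℙ_nᵗ⟩`. -/
def Hmat {d : ℕ} (u : MomF d) (P : (n : ℕ) → Fin (rdim d n) → MPoly d) (n : ℕ) :
    Matrix (Fin (rdim d n)) (Fin (rdim d n)) ℝ :=
  Matrix.of fun j k => u (P n j * P n k)

/-- The second-order differential operator
`L[f] = Σ_{i,j} φ_ij ∂²f/∂xᵢ∂xⱼ + Σ_i ψ_i ∂f/∂xᵢ` associated with `Φ`, `Ψ`. -/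
def Lop {d : ℕ} (Φ : Matrix (Fin d) (Fin d) (MPoly d)) (Ψ : Fin d → MPoly d)
    (f : MPoly d) : MPoly d :=
  (∑ i, ∑ j, Φ i j * pderiv i (pderiv j f)) + ∑ i, Ψ i * pderiv i f

section MyAux
open MvPolynomial Matrix Finset

variable {d : ℕ}

lemma MPolyAux.pderiv_eq_zero_of_deg0 (i : Fin d) {f : MPoly d}
    (hf : f.totalDegree = 0) : pderiv i f = 0 := by
  apply pderiv_eq_zero_of_notMem_vars
  intro hv
  rw [mem_vars] at hv
  obtain ⟨m, hm, him⟩ := hv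
  rw [totalDegree_eq_zero_iff] at hf
  exact (Finsupp.mem_support_iff.mp him) (hf m hm i)

lemma MPolyAux.totalDegree_pderiv_le (i : Fin d) (f : MPoly d) :
    (pderiv i f).totalDegree ≤ f.totalDegree - 1 := by
  conv_lhs => rw [f.as_sum]
  rw [map_sum]
  refine (totalDegree_finset_sum _ _).trans (Finset.sup_le fun m hm => ?_)
  rw [pderiv_monomial]
  by_cases h0 : coeff m f * (m i : ℝ) = 0
  · simp [h0]
  · refine (totalDegree_monomial _ (by exact_mod_cast h0)).le.trans ?_
    have hmi : 1 ≤ m i := by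
      rcases Nat.eq_zero_or_pos (m i) with h | h
      · exfalso; apply h0; rw [h]; simp
      · exact h
    have hle : Finsupp.single i 1 ≤ m := by
      rw [Finsupp.single_le_iff]; exact hmi
    have hsum : ((m - Finsupp.single i 1).sum fun _ e => e) + 1
        = m.sum fun _ e => e := by
      conv_rhs => rw [← tsub_add_cancel_of_le hle]
      rw [Finsupp.sum_add_index' (fun _ => rfl) (fun _ _ _ => rfl)]
      rw [Finsupp.sum_single_index rfl]
    have hlt : (m.sum fun _ e => e) ≤ f.totalDegree := le_totalDegree hm
    omega

lemma MPolyAux.lop_deg (Φ : Matrix (Fin d) (Fin d) (MPoly d)) (Ψ : Fin d → MPoly d)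
    {p q s : ℕ} (hp : matDeg Φ = p) (hq : vecDeg Ψ = q)
    (hs : s = max (p - 2) (q - 1)) (f : MPoly d) :
    (Lop Φ Ψ f).totalDegree ≤ f.totalDegree + s := by
  set n := f.totalDegree with hn
  have hps : p ≤ s + 2 := by omega
  have hqs : q ≤ s + 1 := by omega
  have hΦd : ∀ i j, (Φ i j).totalDegree ≤ p := by
    intro i j; rw [← hp]; exact Finset.le_sup (f := fun x : Fin d × Fin d => (Φ x.1 x.2).totalDegree) (Finset.mem_univ (i, j))
  have hΨd : ∀ i, (Ψ i).totalDegree ≤ q := by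
    intro i; rw [← hq]
    exact Finset.le_sup (f := fun i => (Ψ i).totalDegree) (Finset.mem_univ i)
  refine (totalDegree_add _ _).trans (max_le ?_ ?_)
  · refine (totalDegree_finset_sum _ _).trans (Finset.sup_le fun i _ => ?_)
    refine (totalDegree_finset_sum _ _).trans (Finset.sup_le fun j _ => ?_)
    by_cases h1 : n ≤ 1
    · have h2 : (pderiv j f).totalDegree = 0 := by
        have := MPolyAux.totalDegree_pderiv_le j f
        omega
      rw [MPolyAux.pderiv_eq_zero_of_deg0 i h2]
      simp
    · refine (totalDegree_mul _ _).trans ?_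
      have h2 := MPolyAux.totalDegree_pderiv_le j f
      have h3 := MPolyAux.totalDegree_pderiv_le i (pderiv j f)
      have := hΦd i j
      omega
  · refine (totalDegree_finset_sum _ _).trans (Finset.sup_le fun i _ => ?_)
    by_cases h1 : n = 0
    · rw [MPolyAux.pderiv_eq_zero_of_deg0 i h1]
      simp
    · refine (totalDegree_mul _ _).trans ?_
      have h2 := MPolyAux.totalDegree_pderiv_le i f
      have := hΨd i
      omega

end MyAux

lemma MPolyAux.lop_symm (u : MomF d) (Φ : Matrix (Fin d) (Fin d) (MPoly d))
    (hΦsym : Φ.IsSymm) (Ψ : Fin d → MPoly d) (hP : Pearson u Φ Ψ)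
    (f g : MPoly d) : u (g * Lop Φ Ψ f) = u (f * Lop Φ Ψ g) := by
  have key : ∀ f g : MPoly d, u (g * Lop Φ Ψ f)
      = - u (∑ i, ∑ j, Φ i j * (pderiv i f * pderiv j g)) := by
    intro f g
    have h0 : u (∑ i, (∑ j, Φ i j * pderiv j (g * pderiv i f)
        + Ψ i * (g * pderiv i f))) = 0 := by
      rw [map_sum]
      exact Finset.sum_eq_zero fun i _ => hP (g * pderiv i f) i
    have hswap : ∑ i, ∑ j, Φ i j * (g * pderiv j (pderiv i f))
        = g * ∑ i, ∑ j, Φ i j * pderiv i (pderiv j f) := by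
      rw [Finset.mul_sum, Finset.sum_comm]
      refine Finset.sum_congr rfl fun x _ => ?_
      rw [Finset.mul_sum]
      refine Finset.sum_congr rfl fun y _ => ?_
      rw [hΦsym.apply x y]
      ring
    have hpoly : (∑ i, (∑ j, Φ i j * pderiv j (g * pderiv i f)
          + Ψ i * (g * pderiv i f)))
        = g * Lop Φ Ψ f + ∑ i, ∑ j, Φ i j * (pderiv i f * pderiv j g) := by
      have e1 : ∀ i j : Fin d, Φ i j * (pderiv j g * pderiv i f)
          = Φ i j * (pderiv i f * pderiv j g) := fun i j => by ring
      have e2 : ∀ i : Fin d, Ψ i * (g * pderiv i f)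
          = g * (Ψ i * pderiv i f) := fun i => by ring
      simp only [pderiv_mul, mul_add, Finset.sum_add_distrib, e1, e2]
      rw [Lop, mul_add, ← hswap, Finset.mul_sum]
      abel
    rw [hpoly, map_add] at h0
    linarith
  rw [key f g, key g f]
  congr 2
  refine Finset.sum_comm.trans ?_
  refine Finset.sum_congr rfl fun x _ => Finset.sum_congr rfl fun y _ => ?_
  rw [hΦsym.apply x y]
  ring

lemma MPolyAux.expand {u : MomF d} {P : (n : ℕ) → Fin (rdim d n) → MPoly d}
    (hW : IsWOPS u P) (N : ℕ) (f : MPoly d) (hf : f.totalDegree ≤ N) :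
    ∃ c : (i : ℕ) → Fin (rdim d i) → ℝ,
      f = ∑ i ∈ Finset.range (N + 1), ∑ a, P i a * MvPolynomial.C (c i a) := by
  have hmem : f ∈ Submodule.span ℝ {g | ∃ m ≤ N, ∃ k, P m k = g} :=
    hW.span N (by rw [mem_restrictTotalDegree]; exact hf)
  have hset : {g : MPoly d | ∃ m ≤ N, ∃ k, P m k = g}
      = Set.range (fun x : Σ m : Fin (N + 1), Fin (rdim d m.1) => P x.1.1 x.2) := by
    ext g
    constructor
    · rintro ⟨m, hm, k, rfl⟩
      exact ⟨⟨⟨m, Nat.lt_succ_of_le hm⟩, k⟩, rfl⟩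
    · rintro ⟨⟨m, k⟩, rfl⟩
      exact ⟨m.1, Nat.lt_succ_iff.mp m.2, k, rfl⟩
  rw [hset, Submodule.mem_span_range_iff_exists_fun] at hmem
  obtain ⟨c', hc'⟩ := hmem
  refine ⟨fun i => if h : i < N + 1 then (fun a => c' ⟨⟨i, h⟩, a⟩) else fun _ => 0, ?_⟩
  rw [← hc', ← Finset.univ_sigma_univ, Finset.sum_sigma, Finset.sum_range]
  refine Finset.sum_congr rfl fun m _ => Finset.sum_congr rfl fun a _ => ?_
  beta_reduce
  rw [dif_pos m.isLt, smul_eq_C_mul]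
  exact mul_comm _ _

lemma MPolyAux.vanish {u : MomF d} {P : (n : ℕ) → Fin (rdim d n) → MPoly d}
    (hW : IsWOPS u P) {N m : ℕ} (hm : m < N + 1)
    (c : (i : ℕ) → Fin (rdim d i) → ℝ) (f : MPoly d)
    (hf : f = ∑ i ∈ Finset.range (N + 1), ∑ a, P i a * MvPolynomial.C (c i a))
    (hu : ∀ j, u (P m j * f) = 0) : ∀ a, c m a = 0 := by
  have hterm : ∀ (g h : MPoly d) (r : ℝ),
      u (g * (h * MvPolynomial.C r)) = r * u (g * h) := by
    intro g h r
    have e : g * (h * MvPolynomial.C r) = r • (g * h) := by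
      rw [smul_eq_C_mul]; ring
    rw [e, u.map_smul, smul_eq_mul]
  have hv : Hmat u P m *ᵥ c m = 0 := by
    funext j
    have h1 := hu j
    rw [hf] at h1
    simp only [Finset.mul_sum, map_sum, hterm] at h1
    rw [Finset.sum_eq_single_of_mem m (Finset.mem_range.mpr hm)
      (fun i _ hne => Finset.sum_eq_zero fun a _ => by
        rw [hW.orth m i hne.symm j a, mul_zero])] at h1
    have e2 : (Hmat u P m *ᵥ c m) j = ∑ a, u (P m j * P m a) * c m a := by
      simp [Matrix.mulVec, dotProduct, Hmat]
    rw [e2, Pi.zero_apply, ← h1]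
    exact Finset.sum_congr rfl fun a _ => mul_comm _ _
  have hdet : IsUnit (Hmat u P m).det := isUnit_iff_ne_zero.mpr (hW.Hdet m)
  have hc0 : c m = 0 := by
    have h2 := congrArg (fun v => (Hmat u P m)⁻¹ *ᵥ v) hv
    simpa [Matrix.mulVec_mulVec, Matrix.nonsing_inv_mul _ hdet] using h2
  intro a; rw [hc0]; rfl

lemma MPolyAux.core {u : MomF d} {P : (n : ℕ) → Fin (rdim d n) → MPoly d}
    (hW : IsWOPS u P) (Φ : Matrix (Fin d) (Fin d) (MPoly d)) (hΦsym : Φ.IsSymm)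
    (Ψ : Fin d → MPoly d) {p q s : ℕ} (hp : matDeg Φ = p) (hq : vecDeg Ψ = q)
    (hs : s = max (p - 2) (q - 1)) (hPearson : Pearson u Φ Ψ)
    (n : ℕ) (t : Finset ℕ) (hsub : t ⊆ Finset.range (n + s + 1))
    (hdrop : ∀ m, m < n + s + 1 → m ∉ t → m + s < n ∨ m = 0) :
    ∃ Λ : (i : ℕ) → Matrix (Fin (rdim d i)) (Fin (rdim d n)) ℝ,
      ∀ k, Lop Φ Ψ (P n k) = ∑ i ∈ t, ∑ a, P i a * MvPolynomial.C (Λ i a k) := by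
  have hdeg : ∀ (m : ℕ) (k : Fin (rdim d m)),
      (Lop Φ Ψ (P m k)).totalDegree ≤ m + s := by
    intro m k
    have h := MPolyAux.lop_deg Φ Ψ hp hq hs (P m k)
    rw [hW.deg m k] at h; exact h
  have hzero : ∀ (m : ℕ), (m + s < n ∨ m = 0) →
      ∀ (j : Fin (rdim d m)) (k : Fin (rdim d n)),
      u (P m j * Lop Φ Ψ (P n k)) = 0 := by
    intro m hm j k
    rw [MPolyAux.lop_symm u Φ hΦsym Ψ hPearson]
    rcases hm with hm | rfl
    · obtain ⟨c, hc⟩ := MPolyAux.expand hW (m + s) (Lop Φ Ψ (P m j)) (hdeg m j)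
      rw [hc]
      simp only [Finset.mul_sum, map_sum]
      refine Finset.sum_eq_zero fun i hi => Finset.sum_eq_zero fun a _ => ?_
      have hne : n ≠ i := by
        have := Finset.mem_range.mp hi; omega
      have e : P n k * (P i a * MvPolynomial.C (c i a))
          = (c i a) • (P n k * P i a) := by
        rw [smul_eq_C_mul]; ring
      rw [e, u.map_smul, hW.orth n i hne k a, smul_zero]
    · have hLz : Lop Φ Ψ (P 0 j) = 0 := by
        have h0 : ∀ i : Fin d, pderiv i (P 0 j) = 0 := fun i =>
          MPolyAux.pderiv_eq_zero_of_deg0 i (hW.deg 0 j)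
        simp [Lop, h0]
      rw [hLz, mul_zero, map_zero]
  have hexp : ∀ k : Fin (rdim d n), ∃ c : (i : ℕ) → Fin (rdim d i) → ℝ,
      Lop Φ Ψ (P n k)
        = ∑ i ∈ Finset.range (n + s + 1), ∑ a, P i a * MvPolynomial.C (c i a) :=
    fun k => MPolyAux.expand hW (n + s) (Lop Φ Ψ (P n k)) (hdeg n k)
  choose c hc using hexp
  refine ⟨fun i => Matrix.of fun a k => c k i a, fun k => ?_⟩
  rw [hc k]
  refine (Finset.sum_subset hsub fun m hmr hmt => ?_).symm
  have hz : ∀ a, c k m a = 0 := by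
    refine MPolyAux.vanish hW (Finset.mem_range.mp hmr) (c k) _ (hc k) fun j =>
      hzero m (hdrop m (Finset.mem_range.mp hmr) hmt) j k
  refine Finset.sum_eq_zero fun a _ => ?_
  rw [hz a]; simp

/-- **Matrix differential–difference relation.**
If `u` is semiclassical with data `Φ` (symmetric, degree `p`), `Ψ` (degree
`q ≥ 1`), `s = max{p−2, q−1}`, and `{ℙ_n}` is a WOPS for `u`, then:
(i) for `n ≥ s+1` there are constant matrices `Λᵢⁿ`, `n−s ≤ i ≤ n+s`, with
`L[ℙ_nᵗ] = Σ_{i=n−s}^{n+s} ℙ_iᵗ Λᵢⁿ`; and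
(ii) for `n ≤ s` there are constant matrices `Λᵢⁿ`, `1 ≤ i ≤ n+s`, with
`L[ℙ_nᵗ] = Σ_{i=1}^{n+s} ℙ_iᵗ Λᵢⁿ` (the coefficient of `ℙ_0ᵗ` vanishes). -/
theorem differential_difference_relation
    {d : ℕ} (u : MomF d) (P : (n : ℕ) → Fin (rdim d n) → MPoly d)
    (hW : IsWOPS u P)
    (Φ : Matrix (Fin d) (Fin d) (MPoly d)) (hΦsym : Φ.IsSymm)
    (Ψ : Fin d → MPoly d)
    (p q : ℕ) (hp : matDeg Φ = p) (hq : vecDeg Ψ = q) (hq1 : 1 ≤ q)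
    (hPearson : Pearson u Φ Ψ)
    (hdet : (mApply u Φ).det ≠ 0)
    (s : ℕ) (hs : s = max (p - 2) (q - 1)) :
    (∀ n : ℕ, s + 1 ≤ n →
      ∃ Λ : (i : ℕ) → Matrix (Fin (rdim d i)) (Fin (rdim d n)) ℝ,
        ∀ k, Lop Φ Ψ (P n k) =
          ∑ i ∈ Finset.Icc (n - s) (n + s), ∑ a, P i a * MvPolynomial.C (Λ i a k)) ∧
    (∀ n : ℕ, n ≤ s →
      ∃ Λ : (i : ℕ) → Matrix (Fin (rdim d i)) (Fin (rdim d n)) ℝ,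
        ∀ k, Lop Φ Ψ (P n k) =
          ∑ i ∈ Finset.Icc 1 (n + s), ∑ a, P i a * MvPolynomial.C (Λ i a k)) := by
  constructor
  · intro n hn
    refine MPolyAux.core hW Φ hΦsym Ψ hp hq hs hPearson n
      (Finset.Icc (n - s) (n + s)) ?_ ?_
    · intro i hi
      rw [Finset.mem_range]
      have := (Finset.mem_Icc.mp hi).2
      omega
    · intro m hm hmt
      have h1 : ¬(n - s ≤ m ∧ m ≤ n + s) := fun hx => hmt (Finset.mem_Icc.mpr hx)
      left; omega
  · intro n hn
    refine MPolyAux.core hW Φ hΦsym Ψ hp hq hs hPearson n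
      (Finset.Icc 1 (n + s)) ?_ ?_
    · intro i hi
      rw [Finset.mem_range]
      have := (Finset.mem_Icc.mp hi).2
      omega
    · intro m hm hmt
      have h1 : ¬(1 ≤ m ∧ m ≤ n + s) := fun hx => hmt (Finset.mem_Icc.mpr hx)
      right; omega
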